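/- Let Π be an equitable partition of [n] for G and let C be a cell of Π. Then for every eigenvalue λ of A(G) and every c ∈ C: proj_{V_λ}(R_C) = |C| · proj_{V_λ ∩ U_Π}(e_c). Consequently (1/|C|) · R_C = Σ_{λ ∈ spec A(G)} proj_{V_λ ∩ U_Π}(e_c) for every c ∈ C. -/

import Mathlib

open RealInnerProductSpace


/-- The characteristic vector of a set of vertices, as a vector of Euclidean space `ℝⁿ`. -/
noncomputable def charVec {n : ℕ} (C : Finset (Fin n)) : EuclideanSpace ℝ (Fin n) :=
  WithLp.toLp 2 (fun v => if v ∈ C then (1 : ℝ) else 0)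

/-- The adjacency matrix of `G`, as a linear endomorphism of Euclidean space `ℝⁿ`. -/
noncomputable def adjEnd {n : ℕ} (G : SimpleGraph (Fin n)) [DecidableRel G.Adj] :
    Module.End ℝ (EuclideanSpace ℝ (Fin n)) :=
  Matrix.toEuclideanLin (G.adjMatrix ℝ)

variable {n : ℕ} (G : SimpleGraph (Fin n)) [DecidableRel G.Adj]

lemma adjEnd_symm : (adjEnd G).IsSymmetric := by
  rw [adjEnd, ← Matrix.isHermitian_iff_isSymmetric]
  ext i j
  simp [Matrix.conjTranspose_apply, G.adj_comm i j]

lemma adjEnd_apply (x : EuclideanSpace ℝ (Fin n)) (v : Fin n) :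
    adjEnd G x v = ∑ u ∈ G.neighborFinset v, x u := by
  simp [adjEnd, Matrix.toEuclideanLin_apply, SimpleGraph.adjMatrix_mulVec_apply]

lemma euc_sum_apply {ι : Type*} (s : Finset ι) (f : ι → EuclideanSpace ℝ (Fin n)) (v : Fin n) :
    (∑ i ∈ s, f i) v = ∑ i ∈ s, f i v :=
  by rw [WithLp.ofLp_sum, Finset.sum_apply]

lemma euc_inner (x y : EuclideanSpace ℝ (Fin n)) : ⟪x, y⟫ = ∑ v, x v * y v := by
  simp [PiLp.inner_apply, mul_comm]

lemma charVec_apply (C : Finset (Fin n)) (v : Fin n) :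
    charVec C v = if v ∈ C then (1:ℝ) else 0 := by simp [charVec]

lemma mem_span_parts {P : Finpartition (Finset.univ : Finset (Fin n))}
    {w : EuclideanSpace ℝ (Fin n)}
    (h : ∀ D ∈ P.parts, ∀ x ∈ D, ∀ y ∈ D, w x = w y) :
    w ∈ Submodule.span ℝ (charVec '' (P.parts : Set (Finset (Fin n)))) := by
  classical
  have hw : w = ∑ D ∈ P.parts.attach,
      w (P.nonempty_of_mem_parts D.2).choose • charVec D.1 := by
    refine PiLp.ext fun v => ?_
    rw [euc_sum_apply]
    obtain ⟨D₀, hD₀, hv⟩ := P.exists_mem (Finset.mem_univ v)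
    rw [Finset.sum_eq_single (⟨D₀, hD₀⟩ : {x // x ∈ P.parts})]
    · have := (P.nonempty_of_mem_parts hD₀).choose_spec
      simp only [PiLp.smul_apply, charVec_apply, smul_eq_mul, if_pos hv, mul_one]
      exact (h D₀ hD₀ _ this v hv).symm
    · intro D _ hne
      have hv' : v ∉ D.1 := by
        intro hv'
        exact hne (Subtype.ext (P.eq_of_mem_parts D.2 hD₀ hv' hv))
      simp [charVec_apply, hv']
    · intro hmem
      exact absurd (Finset.mem_attach _ _) hmem
  rw [hw]
  exact Submodule.sum_mem _ fun D _ => Submodule.smul_mem _ _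
    (Submodule.subset_span ⟨D.1, D.2, rfl⟩)

lemma adjEnd_charVec (D : Finset (Fin n)) (v : Fin n) :
    adjEnd G (charVec D) v = ((D.filter (fun d => G.Adj v d)).card : ℝ) := by
  rw [adjEnd_apply]
  simp only [charVec_apply]
  rw [Finset.sum_boole]
  congr 1
  apply Finset.card_nbij' id id <;> simp [SimpleGraph.mem_neighborFinset, and_comm, Set.MapsTo, Set.LeftInvOn, Set.RightInvOn]

section abstractU

variable (T : Module.End ℝ (EuclideanSpace ℝ (Fin n))) (hT : T.IsSymmetric)
  (U : Submodule ℝ (EuclideanSpace ℝ (Fin n))) (hU : ∀ x ∈ U, T x ∈ U)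

include hT hU in
lemma sym_orth : ∀ x ∈ Uᗮ, T x ∈ Uᗮ := by
  intro x hx
  intro u hu
  rw [← hT u x]
  exact hx (T u) (hU u hu)

include hT hU in
lemma proj_mem_eigen (lam : ℝ) {x : EuclideanSpace ℝ (Fin n)}
    (hx : x ∈ Module.End.eigenspace T lam) :
    ((Submodule.orthogonalProjectionOnto U x : U) : EuclideanSpace ℝ (Fin n)) ∈
      Module.End.eigenspace T lam := by
  set Q := ((Submodule.orthogonalProjectionOnto U x : U) : EuclideanSpace ℝ (Fin n)) with hQ
  rw [Module.End.mem_eigenspace_iff] at hx ⊢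
  have h1 : T Q - lam • Q ∈ U :=
    Submodule.sub_mem _ (hU _ (Submodule.orthogonalProjectionOnto U x).2)
      (Submodule.smul_mem _ _ (Submodule.orthogonalProjectionOnto U x).2)
  have h2 : T Q - lam • Q ∈ Uᗮ := by
    have hxQ : x - Q ∈ Uᗮ := Submodule.sub_starProjection_mem_orthogonal x
    have : T Q - lam • Q = lam • (x - Q) - T (x - Q) := by
      rw [map_sub, hx]
      module
    rw [this]
    exact Submodule.sub_mem _ (Submodule.smul_mem _ _ hxQ) (sym_orth T hT U hU _ hxQ)
  have h0 : T Q - lam • Q = 0 := by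
    have hmem := Submodule.mem_inf.mpr ⟨h1, h2⟩
    rw [(Submodule.orthogonal_disjoint U).eq_bot, Submodule.mem_bot] at hmem
    exact hmem
  have := sub_eq_zero.mp h0
  exact this


include hT hU in
lemma proj_eigen_eq (lam : ℝ) {x : EuclideanSpace ℝ (Fin n)} (hx : x ∈ U) :
    ((Submodule.orthogonalProjectionOnto (Module.End.eigenspace T lam) x :
        Module.End.eigenspace T lam) : EuclideanSpace ℝ (Fin n))
      = ((Submodule.orthogonalProjectionOnto (Module.End.eigenspace T lam ⊓ U) x :
          (Module.End.eigenspace T lam ⊓ U : Submodule ℝ (EuclideanSpace ℝ (Fin n)))) :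
            EuclideanSpace ℝ (Fin n)) := by
  set V := Module.End.eigenspace T lam with hV
  set y : EuclideanSpace ℝ (Fin n) := (Submodule.orthogonalProjectionOnto V x : EuclideanSpace ℝ (Fin n))
    with hy
  have hyV : y ∈ V := (Submodule.orthogonalProjectionOnto V x).2
  set Qy : EuclideanSpace ℝ (Fin n) := (Submodule.orthogonalProjectionOnto U y : EuclideanSpace ℝ (Fin n))
    with hQ
  have hQyV : Qy ∈ V := proj_mem_eigen T hT U hU lam hyV
  have hQyU : Qy ∈ U := (Submodule.orthogonalProjectionOnto U y).2
  have hd : y - Qy ∈ Uᗮ := Submodule.sub_starProjection_mem_orthogonal y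
  have hdV : y - Qy ∈ V := Submodule.sub_mem _ hyV hQyV
  have hxy : x - y ∈ Vᗮ := Submodule.sub_starProjection_mem_orthogonal x
  have hzero : y - Qy = 0 := by
    rw [← inner_self_eq_zero (𝕜 := ℝ)]
    have h1 : ⟪x, y - Qy⟫ = 0 := hd x hx
    have h2 : ⟪y - Qy, x - y⟫ = 0 := hxy (y - Qy) hdV
    have h3 : ⟪Qy, y - Qy⟫ = 0 := hd Qy hQyU
    have h1' : ⟪y - Qy, x⟫ = 0 := by rw [real_inner_comm]; exact h1
    have h3' : ⟪y - Qy, Qy⟫ = 0 := by rw [real_inner_comm]; exact h3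
    have e2 : ⟪y - Qy, y⟫ = ⟪y - Qy, x⟫ - ⟪y - Qy, x - y⟫ := by
      rw [inner_sub_right]; ring
    rw [inner_sub_right, e2, h1', h2, h3']
    ring
  have hyQ : y = Qy := sub_eq_zero.mp hzero
  have hyU : y ∈ U := hyQ ▸ hQyU
  exact (Submodule.eq_starProjection_of_mem_orthogonal (Submodule.mem_inf.mpr ⟨hyV, hyU⟩)
    ((Submodule.orthogonal_le inf_le_left) hxy)).symm

include hT in
lemma sum_proj_eigen (spec : Finset ℝ)
    (hspec : ∀ lam : ℝ, lam ∈ spec ↔ Module.End.HasEigenvalue T lam)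
    (x : EuclideanSpace ℝ (Fin n)) :
    ∑ lam ∈ spec, ((Submodule.orthogonalProjectionOnto (Module.End.eigenspace T lam) x :
        Module.End.eigenspace T lam) : EuclideanSpace ℝ (Fin n)) = x := by
  set s : EuclideanSpace ℝ (Fin n) := ∑ lam ∈ spec,
    ((Submodule.orthogonalProjectionOnto (Module.End.eigenspace T lam) x :
        Module.End.eigenspace T lam) : EuclideanSpace ℝ (Fin n)) with hs
  have hy : x - s ∈ (⨆ μ : ℝ, Module.End.eigenspace T μ)ᗮ := by
    rw [← Submodule.iInf_orthogonal, Submodule.mem_iInf]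
    intro μ
    intro u hu
    by_cases hμ : μ ∈ spec
    · have hsum : ∀ lam ∈ spec, lam ≠ μ →
          ⟪u, ((Submodule.orthogonalProjectionOnto (Module.End.eigenspace T lam) x :
            Module.End.eigenspace T lam) : EuclideanSpace ℝ (Fin n))⟫ = 0 := by
        intro lam _ hne
        exact hT.orthogonalFamily_eigenspaces hne.symm ⟨u, hu⟩
          (Submodule.orthogonalProjectionOnto (Module.End.eigenspace T lam) x)
      have hinner : ⟪u, s⟫ = ⟪u, ((Submodule.orthogonalProjectionOnto (Module.End.eigenspace T μ) x :
          Module.End.eigenspace T μ) : EuclideanSpace ℝ (Fin n))⟫ := by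
        rw [hs, inner_sum]
        exact Finset.sum_eq_single μ hsum (fun h => absurd hμ h)
      have hxp : ⟪u, x - ((Submodule.orthogonalProjectionOnto (Module.End.eigenspace T μ) x :
          Module.End.eigenspace T μ) : EuclideanSpace ℝ (Fin n))⟫ = 0 :=
        (Submodule.sub_starProjection_mem_orthogonal x) u hu
      rw [inner_sub_right, hinner]
      rw [inner_sub_right] at hxp
      linarith
    · have : Module.End.eigenspace T μ = ⊥ := by
        by_contra h
        exact hμ ((hspec μ).mpr h)
      rw [this, Submodule.mem_bot] at hu
      simp [hu]
  rw [hT.orthogonalComplement_iSup_eigenspaces_eq_bot, Submodule.mem_bot, sub_eq_zero] at hy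
  exact hy.symm

end abstractU

lemma adjEnd_maps (P : Finpartition (Finset.univ : Finset (Fin n)))
    (hP : ∀ D ∈ P.parts, ∀ D' ∈ P.parts, ∀ x ∈ D, ∀ y ∈ D,
      (D'.filter (fun d => G.Adj x d)).card = (D'.filter (fun d => G.Adj y d)).card) :
    ∀ x ∈ Submodule.span ℝ (charVec '' (P.parts : Set (Finset (Fin n)))),
      adjEnd G x ∈ Submodule.span ℝ (charVec '' (P.parts : Set (Finset (Fin n)))) := by
  intro x hx
  have h : Submodule.span ℝ (charVec '' (P.parts : Set (Finset (Fin n)))) ≤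
      Submodule.comap (adjEnd G)
        (Submodule.span ℝ (charVec '' (P.parts : Set (Finset (Fin n))))) := by
    rw [Submodule.span_le]
    rintro _ ⟨D, hD, rfl⟩
    simp only [SetLike.mem_coe, Submodule.mem_comap]
    refine mem_span_parts ?_
    intro D' hD' a ha b hb
    rw [adjEnd_charVec, adjEnd_charVec]
    exact_mod_cast congrArg Nat.cast (hP D' hD' D hD a ha b hb)
  exact h hx

lemma inner_charVec_charVec (D C : Finset (Fin n)) :
    ⟪charVec D, charVec C⟫ = ((D ∩ C).card : ℝ) := by
  rw [euc_inner]
  have h : ∀ v, charVec D v * charVec C v = if v ∈ D ∩ C then (1:ℝ) else 0 := by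
    intro v
    by_cases h1 : v ∈ D <;> by_cases h2 : v ∈ C <;>
      simp [charVec_apply, Finset.mem_inter, h1, h2]
  simp_rw [h]
  rw [Finset.sum_boole]
  congr 1
  apply Finset.card_nbij' id id <;> simp [Finset.mem_inter, Set.MapsTo, Set.LeftInvOn, Set.RightInvOn]

lemma inner_charVec_single (D : Finset (Fin n)) (c : Fin n) :
    ⟪charVec D, EuclideanSpace.single c (1:ℝ)⟫ = if c ∈ D then 1 else 0 := by
  rw [euc_inner]
  simp [charVec_apply, EuclideanSpace.single_apply]

lemma single_sub_mem_orth (P : Finpartition (Finset.univ : Finset (Fin n)))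
    {C : Finset (Fin n)} (hC : C ∈ P.parts) {c : Fin n} (hc : c ∈ C) :
    EuclideanSpace.single c (1:ℝ) - (C.card : ℝ)⁻¹ • charVec C ∈
      (Submodule.span ℝ (charVec '' (P.parts : Set (Finset (Fin n)))))ᗮ := by
  rw [Submodule.mem_orthogonal]
  intro u hu
  induction hu using Submodule.span_induction with
  | mem w hw =>
    obtain ⟨D, hD, rfl⟩ := hw
    rw [inner_sub_right, inner_smul_right, inner_charVec_single, inner_charVec_charVec]
    have hCne : (0:ℝ) < C.card := by
      exact_mod_cast Finset.card_pos.mpr (P.nonempty_of_mem_parts hC)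
    by_cases h : D = C
    · subst h
      rw [if_pos hc, Finset.inter_self]
      field_simp
      norm_num
    · have hdisj : Disjoint D C := P.disjoint (Finset.mem_coe.mpr hD) (Finset.mem_coe.mpr hC) h
      have hcD : c ∉ D := fun hcD => (Finset.disjoint_left.mp hdisj hcD) hc
      rw [if_neg hcD, Finset.disjoint_iff_inter_eq_empty.mp hdisj]
      simp
  | zero => simp
  | add x y _ _ hx hy => rw [inner_add_left, hx, hy]; ring
  | smul a x _ hx => rw [inner_smul_left, hx]; simp


/-- For an equitable partition `Π` of `[n]` and a cell `C` of `Π`: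
`proj_{V_λ}(R_C) = |C| • proj_{V_λ ∩ U_Π}(e_c)` for every eigenvalue `λ` and every `c ∈ C`,
and consequently `(1/|C|) • R_C = Σ_{λ ∈ spec A(G)} proj_{V_λ ∩ U_Π}(e_c)` for `c ∈ C`. -/
theorem equitable_cell_projection
    {n : ℕ} (G : SimpleGraph (Fin n)) [DecidableRel G.Adj]
    (P : Finpartition (Finset.univ : Finset (Fin n)))
    (hP : ∀ D ∈ P.parts, ∀ D' ∈ P.parts, ∀ x ∈ D, ∀ y ∈ D,
      (D'.filter (fun d => G.Adj x d)).card = (D'.filter (fun d => G.Adj y d)).card)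
    (C : Finset (Fin n)) (hC : C ∈ P.parts)
    (spec : Finset ℝ)
    (hspec : ∀ lam : ℝ, lam ∈ spec ↔ Module.End.HasEigenvalue (adjEnd G) lam) :
    (∀ lam : ℝ, Module.End.HasEigenvalue (adjEnd G) lam → ∀ c ∈ C,
      ((Submodule.orthogonalProjectionOnto (Module.End.eigenspace (adjEnd G) lam) (charVec C) :
          Module.End.eigenspace (adjEnd G) lam) : EuclideanSpace ℝ (Fin n)) =
        (C.card : ℝ) •
          ((Submodule.orthogonalProjectionOnto
              (Module.End.eigenspace (adjEnd G) lam ⊓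
                Submodule.span ℝ (charVec '' (P.parts : Set (Finset (Fin n)))))
              (EuclideanSpace.single c (1 : ℝ)) :
            (Module.End.eigenspace (adjEnd G) lam ⊓
              Submodule.span ℝ (charVec '' (P.parts : Set (Finset (Fin n)))) :
                Submodule ℝ (EuclideanSpace ℝ (Fin n)))) : EuclideanSpace ℝ (Fin n))) ∧
    (∀ c ∈ C,
      (C.card : ℝ)⁻¹ • charVec C =
        ∑ lam ∈ spec,
          ((Submodule.orthogonalProjectionOnto
              (Module.End.eigenspace (adjEnd G) lam ⊓
                Submodule.span ℝ (charVec '' (P.parts : Set (Finset (Fin n)))))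
              (EuclideanSpace.single c (1 : ℝ)) :
            (Module.End.eigenspace (adjEnd G) lam ⊓
              Submodule.span ℝ (charVec '' (P.parts : Set (Finset (Fin n)))) :
                Submodule ℝ (EuclideanSpace ℝ (Fin n)))) : EuclideanSpace ℝ (Fin n))) := by
  classical
  set U := Submodule.span ℝ (charVec '' (P.parts : Set (Finset (Fin n)))) with hUdef
  have hT : (adjEnd G).IsSymmetric := adjEnd_symm G
  have hU : ∀ x ∈ U, adjEnd G x ∈ U := adjEnd_maps G P hP
  have hCU : charVec C ∈ U := Submodule.subset_span ⟨C, hC, rfl⟩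
  have hcard : (0:ℝ) < C.card := by
    exact_mod_cast Finset.card_pos.mpr (P.nonempty_of_mem_parts hC)
  have key : ∀ lam : ℝ, ∀ c ∈ C,
      ((Submodule.orthogonalProjectionOnto (Module.End.eigenspace (adjEnd G) lam ⊓ U)
          (EuclideanSpace.single c (1:ℝ)) :
        (Module.End.eigenspace (adjEnd G) lam ⊓ U :
          Submodule ℝ (EuclideanSpace ℝ (Fin n)))) : EuclideanSpace ℝ (Fin n)) =
      (C.card : ℝ)⁻¹ •
        ((Submodule.orthogonalProjectionOnto (Module.End.eigenspace (adjEnd G) lam ⊓ U) (charVec C) :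
          (Module.End.eigenspace (adjEnd G) lam ⊓ U :
            Submodule ℝ (EuclideanSpace ℝ (Fin n)))) : EuclideanSpace ℝ (Fin n)) := by
    intro lam c hc
    set W : Submodule ℝ (EuclideanSpace ℝ (Fin n)) :=
      Module.End.eigenspace (adjEnd G) lam ⊓ U with hW
    set z : EuclideanSpace ℝ (Fin n) :=
      ((Submodule.orthogonalProjectionOnto W (charVec C) : W) : EuclideanSpace ℝ (Fin n)) with hz
    refine Submodule.eq_starProjection_of_mem_orthogonal
      (Submodule.smul_mem _ _ (Submodule.orthogonalProjectionOnto W (charVec C)).2) ?_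
    have h1 : EuclideanSpace.single c (1:ℝ) - (C.card : ℝ)⁻¹ • charVec C ∈ Wᗮ :=
      Submodule.orthogonal_le inf_le_right (single_sub_mem_orth P hC hc)
    have h2 : charVec C - z ∈ Wᗮ := Submodule.sub_starProjection_mem_orthogonal _
    have heq : EuclideanSpace.single c (1:ℝ) - (C.card : ℝ)⁻¹ • z =
        (EuclideanSpace.single c (1:ℝ) - (C.card : ℝ)⁻¹ • charVec C)
          + (C.card : ℝ)⁻¹ • (charVec C - z) := by module
    rw [heq]
    exact Submodule.add_mem _ h1 (Submodule.smul_mem _ _ h2)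
  have keyV : ∀ lam : ℝ,
      ((Submodule.orthogonalProjectionOnto (Module.End.eigenspace (adjEnd G) lam) (charVec C) :
          Module.End.eigenspace (adjEnd G) lam) : EuclideanSpace ℝ (Fin n)) =
      ((Submodule.orthogonalProjectionOnto (Module.End.eigenspace (adjEnd G) lam ⊓ U) (charVec C) :
        (Module.End.eigenspace (adjEnd G) lam ⊓ U :
          Submodule ℝ (EuclideanSpace ℝ (Fin n)))) : EuclideanSpace ℝ (Fin n)) :=
    fun lam => proj_eigen_eq (adjEnd G) hT U hU lam hCU
  constructor
  · intro lam _ c hc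
    rw [keyV lam, key lam c hc, smul_smul, mul_inv_cancel₀ (ne_of_gt hcard), one_smul]
  · intro c hc
    have hsum := sum_proj_eigen (adjEnd G) hT spec hspec (charVec C)
    calc (C.card : ℝ)⁻¹ • charVec C
        = (C.card : ℝ)⁻¹ • ∑ lam ∈ spec,
            ((Submodule.orthogonalProjectionOnto (Module.End.eigenspace (adjEnd G) lam) (charVec C) :
              Module.End.eigenspace (adjEnd G) lam) : EuclideanSpace ℝ (Fin n)) := by
          rw [hsum]
      _ = ∑ lam ∈ spec, (C.card : ℝ)⁻¹ •
            ((Submodule.orthogonalProjectionOnto (Module.End.eigenspace (adjEnd G) lam) (charVec C) :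
              Module.End.eigenspace (adjEnd G) lam) : EuclideanSpace ℝ (Fin n)) :=
          Finset.smul_sum
      _ = _ := by
          refine Finset.sum_congr rfl fun lam _ => ?_
          rw [keyV lam, ← key lam c hc]
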